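/- arXiv:1206.5930 — 6 statements merged into one kernel-verified Lean document; each statement's English description precedes it below -/
import Mathlib

section
/- A triangle-free combinatorial (r,k)-configuration with k > 2 has unique neighborhoods: if two points p and q satisfy N(p) = N(q), then p = q. -/
open Finset

variable {P : Type*}

/-- Two points are collinear if they are equal or some line contains both. -/
def Collin [DecidableEq P] (L : Finset (Finset P)) (p q : P) : Prop :=
  p = q ∨ ∃ l ∈ L, p ∈ l ∧ q ∈ l

/-- The (open) neighborhood `N p` of a point `p`: the points collinear with `p`
and different from `p`. -/
def nbhd [Fintype P] [DecidableEq P] (L : Finset (Finset P)) (p : P) : Finset P :=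
  Finset.univ.filter fun q => q ≠ p ∧ ∃ l ∈ L, p ∈ l ∧ q ∈ l

/-- The closed neighborhood `CN p` of a point `p`: its neighborhood together with `p`. -/
def cnbhd [Fintype P] [DecidableEq P] (L : Finset (Finset P)) (p : P) : Finset P :=
  insert p (nbhd L p)

/-- A combinatorial `(v,b,r,k)`-configuration: `v` points, `b` lines, every line
has exactly `k ≥ 2` points, every point is on exactly `r ≥ 1` lines, and any two
distinct points are on at most one common line. -/
def IsConfiguration [Fintype P] [DecidableEq P] (L : Finset (Finset P))
    (v b r k : ℕ) : Prop :=
  Fintype.card P = v ∧ L.card = b ∧ 2 ≤ k ∧ 1 ≤ r ∧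
  (∀ l ∈ L, l.card = k) ∧
  (∀ p : P, (L.filter fun l => p ∈ l).card = r) ∧
  (∀ p q : P, p ≠ q → (L.filter fun l => p ∈ l ∧ q ∈ l).card ≤ 1)

/-- A triangle: three distinct points that are pairwise collinear via three
distinct lines. -/
def HasTriangle [DecidableEq P] (L : Finset (Finset P)) : Prop :=
  ∃ p q s : P, ∃ l₁ l₂ l₃ : Finset P, l₁ ∈ L ∧ l₂ ∈ L ∧ l₃ ∈ L ∧
    p ≠ q ∧ q ≠ s ∧ p ≠ s ∧ l₁ ≠ l₂ ∧ l₂ ≠ l₃ ∧ l₁ ≠ l₃ ∧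
    p ∈ l₁ ∧ q ∈ l₁ ∧ q ∈ l₂ ∧ s ∈ l₂ ∧ p ∈ l₃ ∧ s ∈ l₃

/-- A triangle-free combinatorial `(r,k)`-configuration with `k > 2` has unique
neighborhoods: if `N p = N q` then `p = q`. -/
theorem triangle_free_unique_neighborhoods {P : Type*} [Fintype P]
    [DecidableEq P] (L : Finset (Finset P)) (v b r k : ℕ)
    (hC : IsConfiguration L v b r k) (hk : 2 < k) (htf : ¬HasTriangle L)
    (p q : P) (h : nbhd L p = nbhd L q) :
    p = q := by
  obtain ⟨hv, hb, hk2, hr, hlines, hpts, hunique⟩ := hC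
  by_contra hpq
  have huniq : ∀ {a c : P} {l₁ l₂ : Finset P}, a ≠ c → l₁ ∈ L → l₂ ∈ L →
      a ∈ l₁ → c ∈ l₁ → a ∈ l₂ → c ∈ l₂ → l₁ = l₂ := by
    intro a c l₁ l₂ hac h1 h2 ha1 hc1 ha2 hc2
    exact Finset.card_le_one.mp (hunique a c hac) l₁
      (Finset.mem_filter.mpr ⟨h1, ha1, hc1⟩) l₂ (Finset.mem_filter.mpr ⟨h2, ha2, hc2⟩)
  -- q is not collinear with p via any line
  have hqn : ∀ m ∈ L, p ∈ m → q ∉ m := by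
    intro m hm hpm hqm
    have hq : q ∈ nbhd L p := by
      simp only [nbhd, Finset.mem_filter, Finset.mem_univ, true_and]
      exact ⟨fun e => hpq e.symm, m, hm, hpm, hqm⟩
    rw [h] at hq
    simp only [nbhd, Finset.mem_filter] at hq
    exact hq.2.1 rfl
  -- a line through p
  obtain ⟨l, hlL, hpl⟩ : ∃ l ∈ L, p ∈ l := by
    have hne : (L.filter fun l => p ∈ l).Nonempty := by
      rw [← Finset.card_pos, hpts p]; omega
    obtain ⟨l, hl⟩ := hne
    rw [Finset.mem_filter] at hl
    exact ⟨l, hl.1, hl.2⟩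
  -- two other points on l
  have hcard : 1 < (l.erase p).card := by
    have := Finset.card_erase_of_mem hpl
    rw [hlines l hlL] at this
    omega
  obtain ⟨x, hx, y, hy, hxy⟩ := Finset.one_lt_card.mp hcard
  obtain ⟨hxp, hxl⟩ := Finset.mem_erase.mp hx
  obtain ⟨hyp, hyl⟩ := Finset.mem_erase.mp hy
  have hxq : x ∈ nbhd L q := by
    rw [← h]
    simp only [nbhd, Finset.mem_filter, Finset.mem_univ, true_and]
    exact ⟨hxp, l, hlL, hpl, hxl⟩
  have hyq : y ∈ nbhd L q := by
    rw [← h]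
    simp only [nbhd, Finset.mem_filter, Finset.mem_univ, true_and]
    exact ⟨hyp, l, hlL, hpl, hyl⟩
  simp only [nbhd, Finset.mem_filter, Finset.mem_univ, true_and] at hxq hyq
  obtain ⟨hxq', m₁, hm₁, hqm₁, hxm₁⟩ := hxq
  obtain ⟨hyq', m₂, hm₂, hqm₂, hym₂⟩ := hyq
  have hm₁l : m₁ ≠ l := fun e => hqn l hlL hpl (e ▸ hqm₁)
  have hm₂l : m₂ ≠ l := fun e => hqn l hlL hpl (e ▸ hqm₂)
  have hm₁₂ : m₁ ≠ m₂ := by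
    intro e
    exact hm₁l (huniq hxy hm₁ hlL hxm₁ (e ▸ hym₂) hxl hyl)
  exact htf ⟨x, y, q, l, m₂, m₁, hlL, hm₂, hm₁, hxy, hyq', hxq',
    fun e => hm₂l e.symm, fun e => hm₁₂ e.symm, fun e => hm₁l e.symm,
    hxl, hyl, hym₂, hqm₂, hxm₁, hqm₁⟩
end

section
/- Every pentagonal geometry has unique neighborhoods: if two points p and q satisfy N(p) = N(q), then p = q. -/
open Finset

variable {P : Type*}

/-- A pentagonal geometry: a combinatorial configuration in which, for every
point `p`, there is a line (the opposite line of `p`) whose point set is the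
complement of the closed neighborhood of `p`. -/
def IsPentagonalGeometry [Fintype P] [DecidableEq P] (L : Finset (Finset P))
    (v b r k : ℕ) : Prop :=
  IsConfiguration L v b r k ∧ ∀ p : P, ∃ l ∈ L, l = Finset.univ \ cnbhd L p

/-- Every pentagonal geometry has unique neighborhoods: if `N p = N q` then
`p = q`. -/
theorem pentagonal_unique_neighborhoods {P : Type*} [Fintype P] [DecidableEq P]
    (L : Finset (Finset P)) (v b r k : ℕ)
    (hP : IsPentagonalGeometry L v b r k) (p q : P)
    (h : nbhd L p = nbhd L q) :
    p = q := by
  by_contra hpq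
  obtain ⟨hconf, hopp⟩ := hP
  obtain ⟨_, _, hk2, _, hcard, _, _⟩ := hconf
  obtain ⟨l, hlL, hl⟩ := hopp p
  -- q is not in nbhd L p
  have hqn : q ∉ nbhd L p := by
    intro hq
    have hpn : p ∈ nbhd L q := by
      simp only [nbhd, Finset.mem_filter, Finset.mem_univ, true_and] at hq ⊢
      obtain ⟨hne, m, hmL, hpm, hqm⟩ := hq
      exact ⟨fun e => hpq e, m, hmL, hqm, hpm⟩
    rw [← h] at hpn
    simp [nbhd] at hpn
  have hql : q ∈ l := by
    rw [hl]
    simp only [Finset.mem_sdiff, Finset.mem_univ, true_and, cnbhd, Finset.mem_insert]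
    push_neg
    exact ⟨fun e => hpq e.symm, hqn⟩
  have h2 : 1 < l.card := lt_of_lt_of_le one_lt_two (hk2.trans_eq (hcard l hlL).symm)
  obtain ⟨x, hxl, hxq⟩ := Finset.exists_mem_ne h2 q
  have hxnp : x ∉ nbhd L p := by
    rw [hl] at hxl
    simp only [Finset.mem_sdiff, cnbhd, Finset.mem_insert] at hxl
    exact fun hc => hxl.2 (Or.inr hc)
  have hxnq : x ∈ nbhd L q := by
    simp only [nbhd, Finset.mem_filter, Finset.mem_univ, true_and]
    exact ⟨hxq, l, hlL, hql, hxl⟩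
  rw [← h] at hxnq
  exact hxnp hxnq
end

section
/- A combinatorial (v,b,r,k)-configuration with deficiency one has unique closed neighborhoods: every point p has a unique anti-podal point (a unique point not collinear with p), anti-podality is an involution without fixed points, and CN(p) = CN(q) implies p = q. -/
open Finset

variable {P : Type*}

lemma collin_symm [DecidableEq P] (L : Finset (Finset P)) {p q : P}
    (h : Collin L p q) : Collin L q p := by
  rcases h with h | ⟨l, hl, hp, hq⟩
  · exact Or.inl h.symm
  · exact Or.inr ⟨l, hl, hq, hp⟩

lemma mem_cnbhd_iff [Fintype P] [DecidableEq P] (L : Finset (Finset P)) (p q : P) :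
    q ∈ cnbhd L p ↔ Collin L p q := by
  simp only [cnbhd, nbhd, mem_insert, mem_filter, mem_univ, true_and, Collin]
  constructor
  · rintro (h | ⟨-, h⟩)
    · exact Or.inl h.symm
    · exact Or.inr h
  · rintro (h | h)
    · exact Or.inl h.symm
    · by_cases hq : q = p
      · exact Or.inl hq
      · exact Or.inr ⟨hq, h⟩

lemma nbhd_eq_biUnion [Fintype P] [DecidableEq P] (L : Finset (Finset P)) (p : P) :
    nbhd L p = (L.filter fun l => p ∈ l).biUnion (fun l => l.erase p) := by
  ext q
  simp only [nbhd, mem_filter, mem_univ, true_and, mem_biUnion, mem_erase]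
  constructor
  · rintro ⟨hq, l, hl, hp, hql⟩
    exact ⟨l, ⟨hl, hp⟩, hq, hql⟩
  · rintro ⟨l, ⟨hl, hp⟩, hq, hql⟩
    exact ⟨hq, l, hl, hp, hql⟩

lemma nbhd_card [Fintype P] [DecidableEq P] {L : Finset (Finset P)} {v b r k : ℕ}
    (hC : IsConfiguration L v b r k) (p : P) : (nbhd L p).card = r * (k - 1) := by
  obtain ⟨-, -, -, -, hk, hr, hint⟩ := hC
  rw [nbhd_eq_biUnion]
  rw [Finset.card_biUnion]
  · rw [Finset.sum_congr rfl (fun l hl => ?_), Finset.sum_const, hr p, smul_eq_mul]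
    rw [mem_filter] at hl
    rw [Finset.card_erase_of_mem hl.2, hk l hl.1]
  · intro l1 h1 l2 h2 hne
    rw [mem_coe, mem_filter] at h1 h2
    rw [Function.onFun, Finset.disjoint_left]
    intro q hq1 hq2
    rw [mem_erase] at hq1 hq2
    have hsub : {l1, l2} ⊆ L.filter fun l => p ∈ l ∧ q ∈ l := by
      intro l hl
      rcases Finset.mem_insert.mp hl with h | h
      · subst h; exact mem_filter.mpr ⟨h1.1, h1.2, hq1.2⟩
      · rw [Finset.mem_singleton] at h; subst h
        exact mem_filter.mpr ⟨h2.1, h2.2, hq2.2⟩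
    have h2card : ({l1, l2} : Finset (Finset P)).card = 2 :=
      Finset.card_pair hne
    have := Finset.card_le_card hsub
    rw [h2card] at this
    have := this.trans (hint p q (Ne.symm hq1.1))
    omega

/-- A combinatorial `(v,b,r,k)`-configuration with deficiency one (that is,
`v = r·(k−1)+2`) has unique closed neighborhoods: every point has a unique
anti-podal point (a unique point not collinear with it), anti-podality is an
involution without fixed points, and `CN p = CN q` implies `p = q`. -/
theorem deficiency_one_unique_closed_neighborhoods {P : Type*} [Fintype P]
    [DecidableEq P] (L : Finset (Finset P)) (v b r k : ℕ)
    (hC : IsConfiguration L v b r k) (hdef : v = r * (k - 1) + 2) :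
    (∀ p : P, ∃! q : P, ¬Collin L p q) ∧
    (∃ antip : P → P, (∀ p : P, ¬Collin L p (antip p)) ∧
      (∀ p q : P, ¬Collin L p q → q = antip p) ∧
      (∀ p : P, antip (antip p) = p) ∧ (∀ p : P, antip p ≠ p)) ∧
    (∀ p q : P, cnbhd L p = cnbhd L q → p = q) := by
  classical
  have hv : Fintype.card P = v := hC.1
  have hcn : ∀ p : P, (cnbhd L p).card = r * (k - 1) + 1 := by
    intro p
    rw [cnbhd, Finset.card_insert_of_notMem, nbhd_card hC]
    simp [nbhd]
  have key : ∀ p : P, (Finset.univ.filter fun q => ¬Collin L p q).card = 1 := by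
    intro p
    have hcompl : (Finset.univ.filter fun q => ¬Collin L p q) = (cnbhd L p)ᶜ := by
      ext q
      simp [mem_cnbhd_iff]
    rw [hcompl, Finset.card_compl, hcn, hv, hdef]; omega
  have hEU : ∀ p : P, ∃! q : P, ¬Collin L p q := by
    intro p
    obtain ⟨a, ha⟩ := Finset.card_eq_one.mp (key p)
    have haM : a ∈ Finset.univ.filter fun q => ¬Collin L p q := by
      rw [ha]; exact Finset.mem_singleton_self a
    refine ⟨a, (mem_filter.mp haM).2, fun y hy => ?_⟩
    have : y ∈ Finset.univ.filter fun q => ¬Collin L p q :=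
      mem_filter.mpr ⟨mem_univ y, hy⟩
    rw [ha, Finset.mem_singleton] at this
    exact this
  choose antip hA hU using fun p => hEU p
  refine ⟨hEU, ⟨antip, hA, fun p q h => (hU p q h), ?_, ?_⟩, ?_⟩
  · intro p
    exact (hU (antip p) p (fun h => hA p (collin_symm L h))).symm
  · intro p h
    exact hA p (by rw [h]; exact Or.inl rfl)
  · intro p q hpq
    have h1 : antip p ∉ cnbhd L p := fun h => hA p ((mem_cnbhd_iff L p _).mp h)
    rw [hpq] at h1
    have h2 : ¬Collin L q (antip p) := fun h => h1 ((mem_cnbhd_iff L q _).mpr h)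
    have h3 : antip p = antip q := hU q (antip p) h2
    have hinv : ∀ x, antip (antip x) = x :=
      fun x => (hU (antip x) x (fun h => hA x (collin_symm L h))).symm
    calc p = antip (antip p) := (hinv p).symm
      _ = antip (antip q) := by rw [h3]
      _ = q := hinv q
end

section
/- If two distinct points p and q of a pentagonal geometry have the same opposite line l, then p and q are collinear and every point of l has as its opposite line the line spanned by p and q. -/
open Finset

variable {P : Type*}

/-- If two distinct points `p` and `q` of a pentagonal geometry have the same
opposite line `l`, then `p` and `q` are collinear and every point of `l` has as
its opposite line the line spanned by `p` and `q`. -/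
theorem pentagonal_opposite_line_pair {P : Type*} [Fintype P] [DecidableEq P]
    (L : Finset (Finset P)) (v b r k : ℕ)
    (hP : IsPentagonalGeometry L v b r k) (p q : P) (hpq : p ≠ q)
    (l : Finset P) (hl : l ∈ L)
    (hlp : l = Finset.univ \ cnbhd L p) (hlq : l = Finset.univ \ cnbhd L q) :
    Collin L p q ∧
    ∀ x ∈ l, ∀ m ∈ L, p ∈ m → q ∈ m → m = Finset.univ \ cnbhd L x := by
  -- CN p = CN q
  have hCN : cnbhd L p = cnbhd L q := by
    have h1 : cnbhd L p = Finset.univ \ l := by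
      rw [hlp]; simp
    have h2 : cnbhd L q = Finset.univ \ l := by
      rw [hlq]; simp
    rw [h1, h2]
  have hqCN : q ∈ cnbhd L p := by
    rw [hCN]; exact Finset.mem_insert_self q _
  have hq' : q ∈ nbhd L p := by
    rcases Finset.mem_insert.mp hqCN with h | h
    · exact absurd h.symm hpq
    · exact h
  have hq'' := (Finset.mem_filter.mp hq').2.2
  constructor
  · exact Or.inr hq''
  · intro x hx m hm hpm hqm
    -- x is not collinear with p nor with q
    have hxnp : x ∉ cnbhd L p := by
      rw [hlp] at hx; exact (Finset.mem_sdiff.mp hx).2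
    have hxnq : x ∉ cnbhd L q := by
      rw [hlq] at hx; exact (Finset.mem_sdiff.mp hx).2
    have hxp : x ≠ p := fun h => hxnp (h ▸ Finset.mem_insert_self x _)
    have hxq : x ≠ q := fun h => hxnq (h ▸ Finset.mem_insert_self x _)
    have hnpx : ¬ ∃ l' ∈ L, p ∈ l' ∧ x ∈ l' := by
      intro ⟨l', hl', hpl', hxl'⟩
      exact hxnp (Finset.mem_insert_of_mem (Finset.mem_filter.mpr
        ⟨Finset.mem_univ x, hxp, l', hl', hpl', hxl'⟩))
    have hnqx : ¬ ∃ l' ∈ L, q ∈ l' ∧ x ∈ l' := by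
      intro ⟨l', hl', hql', hxl'⟩
      exact hxnq (Finset.mem_insert_of_mem (Finset.mem_filter.mpr
        ⟨Finset.mem_univ x, hxq, l', hl', hql', hxl'⟩))
    -- the opposite line of x
    obtain ⟨l', hl', hl'x⟩ := hP.2 x
    have hpl' : p ∈ l' := by
      rw [hl'x, Finset.mem_sdiff]
      refine ⟨Finset.mem_univ p, fun h => ?_⟩
      rcases Finset.mem_insert.mp h with h | h
      · exact hxp h.symm
      · obtain ⟨_, _, l'', hl'', hxl'', hpl''⟩ := Finset.mem_filter.mp h
        exact hnpx ⟨l'', hl'', hpl'', hxl''⟩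
    have hql' : q ∈ l' := by
      rw [hl'x, Finset.mem_sdiff]
      refine ⟨Finset.mem_univ q, fun h => ?_⟩
      rcases Finset.mem_insert.mp h with h | h
      · exact hxq h.symm
      · obtain ⟨_, _, l'', hl'', hxl'', hql''⟩ := Finset.mem_filter.mp h
        exact hnqx ⟨l'', hl'', hql'', hxl''⟩
    have hcard := hP.1.2.2.2.2.2.2 p q hpq
    have := Finset.card_le_one.mp hcard m
      (Finset.mem_filter.mpr ⟨hm, hpm, hqm⟩) l'
      (Finset.mem_filter.mpr ⟨hl', hpl', hql'⟩)
    rw [this, hl'x]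
end

section
/- Let C be a combinatorial (v,b,r,k)-configuration with n-anonymous neighborhoods. Then the relation 'having the same neighborhood' induces a partition G = {g_1, …, g_m} of the point set such that every part has cardinality at least n, no two distinct points in the same part are collinear, r ≥ n, and m ≥ k. -/
open Finset

variable {P : Type*}

/-- The anonymity class of a point `p`: the set of points with the same
neighborhood as `p`. -/
def anonClass [Fintype P] [DecidableEq P] (L : Finset (Finset P)) (p : P) :
    Finset P :=
  Finset.univ.filter fun q => nbhd L q = nbhd L p

/-- In a combinatorial `(v,b,r,k)`-configuration with `n`-anonymous
neighborhoods, the relation of having the same neighborhood induces a partition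
of the point set whose parts (the anonymity classes) have cardinality at least
`n`, no two distinct points of the same part are collinear, `r ≥ n`, and the
number `m` of parts satisfies `m ≥ k`. -/
theorem anonymous_neighborhoods_structure {P : Type*} [Fintype P]
    [DecidableEq P] [Nonempty P] (L : Finset (Finset P)) (v b r k n : ℕ)
    (hC : IsConfiguration L v b r k)
    (hanon : ∀ p : P, n ≤ (anonClass L p).card) :
    (∀ p : P, p ∈ anonClass L p) ∧
    (∀ p q : P, anonClass L p = anonClass L q ∨
      Disjoint (anonClass L p) (anonClass L q)) ∧
    (∀ p : P, n ≤ (anonClass L p).card) ∧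
    (∀ p q : P, q ∈ anonClass L p → q ≠ p → ¬Collin L p q) ∧
    n ≤ r ∧
    k ≤ (Finset.univ.image fun p : P => anonClass L p).card := by

  obtain ⟨hv, hb, hk, hr, hlines, hpt, hpair⟩ := hC
  have hmem : ∀ p : P, p ∈ anonClass L p := by
    intro p; simp [anonClass]
  have hclass : ∀ p q : P, q ∈ anonClass L p → nbhd L q = nbhd L p := by
    intro p q hq; simpa [anonClass] using hq
  have hncol : ∀ p q : P, q ∈ anonClass L p → q ≠ p → ¬Collin L p q := by
    intro p q hq hne hcol
    have hnb := hclass p q hq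
    rcases hcol with h | ⟨l, hl, hp, hql⟩
    · exact hne h.symm
    · have hq1 : q ∈ nbhd L p := by
        simp only [nbhd, mem_filter, mem_univ, true_and]
        exact ⟨hne, l, hl, hp, hql⟩
      rw [← hnb] at hq1
      simp [nbhd] at hq1
  -- a line through any point, and a second point on it
  have hline : ∀ p : P, ∃ l ∈ L, p ∈ l := by
    intro p
    have hne : (L.filter fun l => p ∈ l).Nonempty := by
      rw [← Finset.card_pos, hpt p]; omega
    obtain ⟨l, hl⟩ := hne
    exact ⟨l, (mem_filter.mp hl).1, (mem_filter.mp hl).2⟩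
  obtain ⟨p0⟩ := ‹Nonempty P›
  obtain ⟨l0, hl0L, hp0l0⟩ := hline p0
  refine ⟨hmem, ?_, hanon, hncol, ?_, ?_⟩
  · intro p q
    by_cases h : Disjoint (anonClass L p) (anonClass L q)
    · exact Or.inr h
    · left
      obtain ⟨x, hxp, hxq⟩ := Finset.not_disjoint_iff.mp h
      have h1 := hclass p x hxp
      have h2 := hclass q x hxq
      ext y
      simp only [anonClass, mem_filter, mem_univ, true_and, ← h1, ← h2]
  · -- n ≤ r
    obtain ⟨q, hql, hqne⟩ := Finset.exists_mem_ne
      (by rw [hlines l0 hl0L]; omega) p0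
    have hqnb : q ∈ nbhd L p0 := by
      simp only [nbhd, mem_filter, mem_univ, true_and]
      exact ⟨hqne, l0, hl0L, hp0l0, hql⟩
    have hex : ∀ x ∈ anonClass L p0, ∃ l ∈ L, x ∈ l ∧ q ∈ l := by
      intro x hx
      have := hclass p0 x hx
      rw [← this] at hqnb
      simp only [nbhd, mem_filter, mem_univ, true_and] at hqnb
      obtain ⟨_, l, hl, hxl, hql'⟩ := hqnb
      exact ⟨l, hl, hxl, hql'⟩
    have hcard : (anonClass L p0).card ≤ (L.filter fun l => q ∈ l).card := by
      apply Finset.card_le_card_of_injOn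
        (fun x => if h : x ∈ anonClass L p0 then (hex x h).choose else l0)
      · intro x hx
        simp only [dif_pos (Finset.mem_coe.mp hx)]
        obtain ⟨hl, _, hql'⟩ := (hex x hx).choose_spec
        exact mem_filter.mpr ⟨hl, hql'⟩
      · intro x hx' y hy' hxy
        have hx := Finset.mem_coe.mp hx'
        have hy := Finset.mem_coe.mp hy'
        simp only at hxy
        rw [dif_pos hx, dif_pos hy] at hxy
        by_contra hne
        obtain ⟨hlx, hxl, hqx⟩ := (hex x hx).choose_spec
        obtain ⟨hly, hyl, hqy⟩ := (hex y hy).choose_spec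
        have hy' : y ∈ anonClass L x := by
          simp only [anonClass, mem_filter, mem_univ, true_and]
          rw [hclass p0 y hy, hclass p0 x hx]
        exact hncol x y hy' (Ne.symm hne)
          (Or.inr ⟨_, hlx, hxl, by rw [hxy]; exact hyl⟩)
    calc n ≤ (anonClass L p0).card := hanon p0
      _ ≤ (L.filter fun l => q ∈ l).card := hcard
      _ = r := hpt q
  · -- k ≤ number of classes
    have hinj : Set.InjOn (fun p => anonClass L p) ↑l0 := by
      intro x hx y hy hxy
      by_contra hne
      have hy' : y ∈ anonClass L x := by
        have := hmem y
        simp only at hxy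
        rwa [← hxy] at this
      exact hncol x y hy' (Ne.symm hne) (Or.inr ⟨l0, hl0L, hx, hy⟩)
    calc k = l0.card := (hlines l0 hl0L).symm
      _ = (l0.image fun p => anonClass L p).card :=
          (Finset.card_image_of_injOn hinj).symm
      _ ≤ (Finset.univ.image fun p : P => anonClass L p).card :=
          Finset.card_le_card (Finset.image_subset_image (Finset.subset_univ l0))
end

section
/- Let C be a connected combinatorial (v,b,r,k)-configuration with n-anonymous neighborhoods whose anonymity partition has all parts of cardinality exactly n, and suppose r = n and the number of parts equals k. Then C is a transversal design TD(k,n) with λ = 1 (the parts of the anonymity partition being the groups), and v = k·n and b = n². -/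
open Finset

variable {P : Type*}

/-- An incidence structure is connected if any two points are joined by a chain
of incidences. -/
def ConfigConnected [DecidableEq P] (L : Finset (Finset P)) : Prop :=
  ∀ p q : P, Relation.ReflTransGen (fun a b : P => ∃ l ∈ L, a ∈ l ∧ b ∈ l) p q

/-- A transversal design `TD(k,n)` with `λ = 1`: `k·n` points, blocks `B` of
exactly `k` points each, a set `G` of `k` groups of cardinality `n` partitioning
the points, every group and block meet in exactly one point, and every pair of
points from distinct groups is in exactly one block. -/
def IsTransversalDesign (P : Type*) [Fintype P] [DecidableEq P]
    (B G : Finset (Finset P)) (k n : ℕ) : Prop :=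
  Fintype.card P = k * n ∧
  (∀ b ∈ B, b.card = k) ∧
  G.card = k ∧
  (∀ g ∈ G, g.card = n) ∧
  (∀ p : P, ∃! g, g ∈ G ∧ p ∈ g) ∧
  (∀ g ∈ G, ∀ b ∈ B, (g ∩ b).card = 1) ∧
  (∀ p q : P, p ≠ q → (∀ g ∈ G, ¬(p ∈ g ∧ q ∈ g)) →
    (B.filter fun b => p ∈ b ∧ q ∈ b).card = 1)

section AuxAnon

variable [Fintype P] [DecidableEq P]

lemma mem_anonClass_iff' (L : Finset (Finset P)) (p q : P) :
    q ∈ anonClass L p ↔ nbhd L q = nbhd L p := by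
  simp [anonClass]

lemma mem_anonClass_self' (L : Finset (Finset P)) (p : P) : p ∈ anonClass L p := by
  simp [anonClass]

lemma anonClass_eq_iff' (L : Finset (Finset P)) (p q : P) :
    anonClass L p = anonClass L q ↔ nbhd L p = nbhd L q := by
  constructor
  · intro h
    have h2 := mem_anonClass_self' L p
    rw [h, mem_anonClass_iff'] at h2
    exact h2
  · intro h; unfold anonClass; rw [h]

lemma anonClass_eq_of_mem' (L : Finset (Finset P)) {p q : P}
    (h : q ∈ anonClass L p) : anonClass L q = anonClass L p :=
  (anonClass_eq_iff' L q p).mpr ((mem_anonClass_iff' L p q).mp h)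

lemma not_collinear_of_nbhd_eq' (L : Finset (Finset P)) {p q : P}
    (h : nbhd L p = nbhd L q) (hne : p ≠ q) : ∀ l ∈ L, ¬(p ∈ l ∧ q ∈ l) := by
  rintro l hl ⟨hp, hq⟩
  have hmem : q ∈ nbhd L p := by
    simp only [nbhd, mem_filter, mem_univ, true_and]
    exact ⟨hne.symm, l, hl, hp, hq⟩
  rw [h] at hmem
  simp [nbhd] at hmem

end AuxAnon

/-- A connected combinatorial `(v,b,r,k)`-configuration with `n`-anonymous
neighborhoods, whose anonymity classes all have cardinality exactly `n`, with
`r = n` and exactly `k` anonymity classes, is a transversal design `TD(k,n)`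
with `λ = 1` whose groups are the anonymity classes; moreover `v = k·n` and
`b = n²`. -/
theorem anonymous_neighborhoods_transversal_design {P : Type*} [Fintype P]
    [DecidableEq P] [Nonempty P] (L : Finset (Finset P)) (v b r k n : ℕ)
    (hconn : ConfigConnected L) (hC : IsConfiguration L v b r k)
    (hclass : ∀ p : P, (anonClass L p).card = n) (hr : r = n)
    (hm : (Finset.univ.image fun p : P => anonClass L p).card = k) :
    IsTransversalDesign P L (Finset.univ.image fun p : P => anonClass L p) k n ∧
    v = k * n ∧ b = n ^ 2 := by
  obtain ⟨hv, hb, hk2, hr1, hlcard, hpr, hpq⟩ := hC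
  set G := (Finset.univ.image fun p : P => anonClass L p) with hG
  have hGmem : ∀ p : P, anonClass L p ∈ G :=
    fun p => Finset.mem_image.mpr ⟨p, Finset.mem_univ p, rfl⟩
  have hn0 : 0 < n := by omega
  -- the class map is injective on every line
  have hinj : ∀ l ∈ L, Set.InjOn (anonClass L) (l : Set P) := by
    intro l hl x hx y hy hxy
    by_contra hne
    exact not_collinear_of_nbhd_eq' L ((anonClass_eq_iff' L x y).mp hxy) hne l hl ⟨hx, hy⟩
  -- every line hits every class
  have himg : ∀ l ∈ L, l.image (anonClass L) = G := by
    intro l hl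
    apply Finset.eq_of_subset_of_card_le
    · intro g hg
      obtain ⟨x, _, rfl⟩ := Finset.mem_image.mp hg
      exact hGmem x
    · rw [hm, Finset.card_image_of_injOn (hinj l hl), hlcard l hl]
  -- every group meets every line in exactly one point
  have hgl : ∀ g ∈ G, ∀ l ∈ L, (g ∩ l).card = 1 := by
    intro g hg l hl
    obtain ⟨p, -, rfl⟩ := Finset.mem_image.mp hg
    have hmem : anonClass L p ∈ l.image (anonClass L) := by rw [himg l hl]; exact hGmem p
    obtain ⟨x, hxl, hx⟩ := Finset.mem_image.mp hmem
    have hxp : x ∈ anonClass L p := hx ▸ mem_anonClass_self' L x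
    rw [Finset.card_eq_one]
    refine ⟨x, ?_⟩
    ext y
    simp only [Finset.mem_inter, Finset.mem_singleton]
    constructor
    · rintro ⟨hyg, hyl⟩
      by_contra hne
      have h1 : nbhd L y = nbhd L x :=
        ((mem_anonClass_iff' L p y).mp hyg).trans ((mem_anonClass_iff' L p x).mp hxp).symm
      exact not_collinear_of_nbhd_eq' L h1 hne l hl ⟨hyl, hxl⟩
    · rintro rfl
      exact ⟨hxp, hxl⟩
  -- any two points of distinct classes are on exactly one common line
  have hcross : ∀ p q : P, anonClass L p ≠ anonClass L q →
      (L.filter fun l => p ∈ l ∧ q ∈ l).card = 1 := by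
    intro p q hne
    have hpqne : p ≠ q := by rintro rfl; exact hne rfl
    have hle := hpq p q hpqne
    have hpnotq : p ∉ anonClass L q := fun h => hne ((anonClass_eq_of_mem' L h).symm ▸ rfl)
    set Lp := L.filter (fun l => p ∈ l) with hLp
    have hdisj : ∀ l₁ ∈ Lp, ∀ l₂ ∈ Lp, l₁ ≠ l₂ →
        Disjoint (anonClass L q ∩ l₁) (anonClass L q ∩ l₂) := by
      intro l₁ h₁ l₂ h₂ hll
      simp only [hLp, Finset.mem_filter] at h₁ h₂
      rw [Finset.disjoint_left]
      intro x hx₁ hx₂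
      simp only [Finset.mem_inter] at hx₁ hx₂
      have hxp : x ≠ p := fun h => hpnotq (h ▸ hx₁.1)
      have h2 : 1 < (L.filter fun l => p ∈ l ∧ x ∈ l).card :=
        Finset.one_lt_card.mpr ⟨l₁, by simp [h₁.1, h₁.2, hx₁.2], l₂,
          by simp [h₂.1, h₂.2, hx₂.2], hll⟩
      exact absurd (hpq p x (Ne.symm hxp)) (by omega)
    have hT : (Lp.biUnion fun l => anonClass L q ∩ l) = anonClass L q := by
      apply Finset.eq_of_subset_of_card_le
      · intro x hx
        obtain ⟨l, -, hxl⟩ := Finset.mem_biUnion.mp hx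
        exact (Finset.mem_inter.mp hxl).1
      · rw [Finset.card_biUnion hdisj]
        have hone : ∀ l ∈ Lp, (anonClass L q ∩ l).card = 1 := fun l hl =>
          hgl _ (hGmem q) l (Finset.mem_filter.mp hl).1
        rw [Finset.sum_congr rfl hone, Finset.sum_const, smul_eq_mul, mul_one, hclass q,
          hLp, hpr p, hr]
    have hq : q ∈ Lp.biUnion fun l => anonClass L q ∩ l := by
      rw [hT]; exact mem_anonClass_self' L q
    obtain ⟨l, hl, hql⟩ := Finset.mem_biUnion.mp hq
    have hlL := Finset.mem_filter.mp hl
    have hpos : 0 < (L.filter fun l => p ∈ l ∧ q ∈ l).card :=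
      Finset.card_pos.mpr ⟨l, Finset.mem_filter.mpr ⟨hlL.1, hlL.2, (Finset.mem_inter.mp hql).2⟩⟩
    omega
  -- partition property
  have huniq : ∀ p : P, ∃! g, g ∈ G ∧ p ∈ g := by
    intro p
    refine ⟨anonClass L p, ⟨hGmem p, mem_anonClass_self' L p⟩, ?_⟩
    rintro g ⟨hg, hpg⟩
    obtain ⟨y, -, rfl⟩ := Finset.mem_image.mp hg
    exact (anonClass_eq_of_mem' L hpg).symm
  -- card P = k * n
  have hGcards : ∀ g ∈ G, g.card = n := by
    intro g hg
    obtain ⟨p, -, rfl⟩ := Finset.mem_image.mp hg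
    exact hclass p
  have hcover : G.biUnion id = Finset.univ := by
    apply Finset.eq_univ_iff_forall.mpr
    intro p
    exact Finset.mem_biUnion.mpr ⟨anonClass L p, hGmem p, mem_anonClass_self' L p⟩
  have hGdisj : ∀ g₁ ∈ G, ∀ g₂ ∈ G, g₁ ≠ g₂ → Disjoint (id g₁) (id g₂) := by
    intro g₁ h₁ g₂ h₂ hne
    rw [Finset.disjoint_left]
    intro x hx₁ hx₂
    obtain ⟨a, -, rfl⟩ := Finset.mem_image.mp h₁
    obtain ⟨c, -, rfl⟩ := Finset.mem_image.mp h₂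
    exact hne ((anonClass_eq_of_mem' L hx₁).symm.trans (anonClass_eq_of_mem' L hx₂))
  have hcardP : Fintype.card P = k * n := by
    have h1 : Fintype.card P = (G.biUnion id).card := by
      rw [hcover]; exact (Finset.card_univ).symm
    rw [h1, Finset.card_biUnion hGdisj]
    simp only [id]
    rw [Finset.sum_congr rfl hGcards, Finset.sum_const, smul_eq_mul, hm]
  -- double counting: L.card * k = card P * n
  have hdouble : L.card * k = Fintype.card P * n := by
    have h1 : ∑ l ∈ L, l.card = L.card * k := by
      rw [Finset.sum_congr rfl hlcard, Finset.sum_const, smul_eq_mul]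
    have h2 : ∑ l ∈ L, l.card = ∑ l ∈ L, ∑ p : P, if p ∈ l then 1 else 0 := by
      refine Finset.sum_congr rfl fun l _ => ?_
      rw [← Finset.card_filter]
      congr 1
      ext p
      simp
    have h3 : ∑ p : P, (L.filter fun l => p ∈ l).card = Fintype.card P * n := by
      have : ∀ p ∈ (Finset.univ : Finset P), (L.filter fun l => p ∈ l).card = n := by
        intro p _; rw [hpr p, hr]
      rw [Finset.sum_congr rfl this, Finset.sum_const, smul_eq_mul, Finset.card_univ]
    rw [← h1, h2, Finset.sum_comm]
    rw [← h3]
    refine Finset.sum_congr rfl fun p _ => ?_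
    rw [Finset.card_filter]
  have hbn : b = n ^ 2 := by
    have hkpos : 0 < k := by omega
    have h4 : b * k = n ^ 2 * k := by
      rw [← hb]
      rw [hdouble, hcardP]
      ring
    exact Nat.eq_of_mul_eq_mul_right hkpos h4
  refine ⟨⟨hcardP, hlcard, hm, hGcards, huniq, hgl, ?_⟩, by rw [← hv, hcardP], hbn⟩
  intro p q hne hnog
  apply hcross
  intro heq
  exact hnog (anonClass L p) (hGmem p) ⟨mem_anonClass_self' L p, heq ▸ mem_anonClass_self' L q⟩
end
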